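/- arXiv:2106.03632 — 3 statements merged into one kernel-verified Lean document; each statement's English description precedes it below -/
import Mathlib

section
/- For binary classification with 0-1 loss, letting H_t be the set of all classifiers X → {−1, 0, +1} (allowing abstention, which is always wrong), the total variation distance (measured as Σ_y ∫ |p_S(x,y) − p_T(x,y)| dx) satisfies d_TV(S,T) ≤ 4·T_{H_t}^r(S,T), where T_{H_t}^r(S,T) = sup_{h∈H_t} |ε_S^{0-1}(h) − ε_T^{0-1}(h)|. -/
open MeasureTheory
open scoped Classical

section Aux

variable {X : Type*} [MeasurableSpace X]

lemma aux_null_compl (μ : Measure (X × ℤ)) [IsProbabilityMeasure μ]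
    (hlab : μ {p : X × ℤ | p.2 = -1 ∨ p.2 = 1} = 1) :
    μ {p : X × ℤ | p.2 = -1 ∨ p.2 = 1}ᶜ = 0 := by
  have hm : MeasurableSet {p : X × ℤ | p.2 = -1 ∨ p.2 = 1} := by
    have : {p : X × ℤ | p.2 = -1 ∨ p.2 = 1}
        = (Prod.snd ⁻¹' {-1}) ∪ (Prod.snd ⁻¹' {1}) := by
      ext p; simp [Set.mem_union]
    rw [this]
    exact ((measurable_snd (measurableSet_singleton _)).union
      (measurable_snd (measurableSet_singleton _)))
  rw [measure_compl hm (measure_ne_top μ _), hlab, measure_univ, tsub_self]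

lemma aux_eq_inter (μ : Measure (X × ℤ)) [IsProbabilityMeasure μ]
    (hlab : μ {p : X × ℤ | p.2 = -1 ∨ p.2 = 1} = 1) (E : Set (X × ℤ)) :
    μ E = μ (E ∩ {p : X × ℤ | p.2 = -1 ∨ p.2 = 1}) := by
  have h0 : μ (E \ {p : X × ℤ | p.2 = -1 ∨ p.2 = 1}) = 0 :=
    measure_mono_null (Set.diff_subset_compl _ _) (aux_null_compl μ hlab)
  refine le_antisymm ?_ (measure_mono Set.inter_subset_left)
  calc μ E = μ (E ∩ {p : X × ℤ | p.2 = -1 ∨ p.2 = 1}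
        ∪ E \ {p : X × ℤ | p.2 = -1 ∨ p.2 = 1}) := by
        rw [Set.inter_union_diff]
    _ ≤ μ (E ∩ {p : X × ℤ | p.2 = -1 ∨ p.2 = 1})
        + μ (E \ {p : X × ℤ | p.2 = -1 ∨ p.2 = 1}) := measure_union_le _ _
    _ = μ (E ∩ {p : X × ℤ | p.2 = -1 ∨ p.2 = 1}) := by rw [h0, add_zero]

/-- error measure of the classifier `x ↦ if x ∈ B then 0 else v`, where `{v,w} = {-1,1}`. -/
lemma aux_err (μ : Measure (X × ℤ)) [IsProbabilityMeasure μ]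
    (hlab : μ {p : X × ℤ | p.2 = -1 ∨ p.2 = 1} = 1)
    (B : Set X) (hB : MeasurableSet B) (v w : ℤ)
    (hvw : (v = 1 ∧ w = -1) ∨ (v = -1 ∧ w = 1)) :
    μ {p : X × ℤ | (if p.1 ∈ B then (0:ℤ) else v) ≠ p.2}
      = μ ((Prod.fst ⁻¹' B) ∩ (Prod.snd ⁻¹' {v})) + μ (Prod.snd ⁻¹' {w}) := by
  rw [aux_eq_inter μ hlab]
  have hset : {p : X × ℤ | (if p.1 ∈ B then (0:ℤ) else v) ≠ p.2}
      ∩ {p : X × ℤ | p.2 = -1 ∨ p.2 = 1}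
      = ((Prod.fst ⁻¹' B) ∩ (Prod.snd ⁻¹' {v})) ∪ (Prod.snd ⁻¹' {w}) := by
    ext ⟨x, y⟩
    rcases hvw with ⟨hv, hw⟩ | ⟨hv, hw⟩ <;> subst hv <;> subst hw <;>
      by_cases hx : x ∈ B <;>
      simp [Set.mem_setOf_eq, hx] <;> omega
  rw [hset]
  have hdisj : Disjoint ((Prod.fst ⁻¹' B) ∩ (Prod.snd ⁻¹' {v})) (Prod.snd ⁻¹' {w}) := by
    rw [Set.disjoint_left]
    rintro ⟨x, y⟩ ⟨-, h1⟩ h2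
    simp only [Set.mem_preimage, Set.mem_singleton_iff] at h1 h2
    rcases hvw with ⟨hv, hw⟩ | ⟨hv, hw⟩ <;> omega
  exact measure_union hdisj (measurable_snd (measurableSet_singleton _))

lemma aux_A (μ : Measure (X × ℤ)) [IsProbabilityMeasure μ]
    (hlab : μ {p : X × ℤ | p.2 = -1 ∨ p.2 = 1} = 1)
    (A : Set (X × ℤ)) (hA : MeasurableSet A) :
    μ A = μ ((Prod.fst ⁻¹' {x | (x, 1) ∈ A}) ∩ (Prod.snd ⁻¹' {1}))
        + μ ((Prod.fst ⁻¹' {x | (x, -1) ∈ A}) ∩ (Prod.snd ⁻¹' {-1})) := by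
  rw [aux_eq_inter μ hlab]
  have hset : A ∩ {p : X × ℤ | p.2 = -1 ∨ p.2 = 1}
      = ((Prod.fst ⁻¹' {x | (x, 1) ∈ A}) ∩ (Prod.snd ⁻¹' {1}))
        ∪ ((Prod.fst ⁻¹' {x | (x, -1) ∈ A}) ∩ (Prod.snd ⁻¹' {-1})) := by
    ext ⟨x, y⟩
    constructor
    · rintro ⟨hA, hy | hy⟩ <;> subst hy
      · exact Or.inr ⟨hA, rfl⟩
      · exact Or.inl ⟨hA, rfl⟩
    · rintro (⟨hA, hy⟩ | ⟨hA, hy⟩) <;>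
        simp only [Set.mem_preimage, Set.mem_singleton_iff] at hA hy <;>
        subst hy
      · exact ⟨hA, Or.inr rfl⟩
      · exact ⟨hA, Or.inl rfl⟩
  rw [hset]
  have hdisj : Disjoint ((Prod.fst ⁻¹' {x | (x, 1) ∈ A}) ∩ (Prod.snd ⁻¹' {1}))
      ((Prod.fst ⁻¹' {x | (x, -1) ∈ A}) ∩ (Prod.snd ⁻¹' {-1})) := by
    rw [Set.disjoint_left]
    rintro ⟨x, y⟩ ⟨-, h1⟩ ⟨-, h2⟩
    simp only [Set.mem_preimage, Set.mem_singleton_iff] at h1 h2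
    omega
  have hm2 : MeasurableSet {x : X | (x, (-1:ℤ)) ∈ A} :=
    hA.preimage (measurable_id.prodMk measurable_const)
  exact measure_union hdisj
    ((measurable_fst hm2).inter (measurable_snd (measurableSet_singleton _)))

lemma aux_labels (μ : Measure (X × ℤ)) [IsProbabilityMeasure μ]
    (hlab : μ {p : X × ℤ | p.2 = -1 ∨ p.2 = 1} = 1) :
    μ (Prod.snd ⁻¹' {1}) + μ (Prod.snd ⁻¹' {-1}) = 1 := by
  have hset : {p : X × ℤ | p.2 = -1 ∨ p.2 = 1}
      = (Prod.snd ⁻¹' ({1} : Set ℤ)) ∪ (Prod.snd ⁻¹' {-1}) := by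
    ext p; simp [Set.mem_union, or_comm]
  have hdisj : Disjoint (Prod.snd ⁻¹' ({1} : Set ℤ) : Set (X × ℤ)) (Prod.snd ⁻¹' {-1}) := by
    rw [Set.disjoint_left]
    rintro ⟨x, y⟩ h1 h2
    simp only [Set.mem_preimage, Set.mem_singleton_iff] at h1 h2
    omega
  rw [← measure_union hdisj (measurable_snd (measurableSet_singleton _)), ← hset, hlab]

lemma aux_le_one (μ : Measure (X × ℤ)) [IsProbabilityMeasure μ] (s : Set (X × ℤ)) :
    (μ s).toReal ≤ 1 := by
  have h := ENNReal.toReal_mono (measure_ne_top μ Set.univ) (measure_mono (Set.subset_univ s))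
  simpa using h

end Aux

/-- For binary classification with 0-1 loss and classifiers allowed to abstain (output 0,
always counted as an error), the total variation distance in the paper's convention
(L¹ distance of the joint densities, i.e. twice the sup-over-events distance) is bounded by
four times the realizable transfer measure over the class of all such classifiers. -/
theorem stmt_10 {X : Type*} [MeasurableSpace X]
    (S T : Measure (X × ℤ)) [IsProbabilityMeasure S] [IsProbabilityMeasure T]
    (hSlab : S {p : X × ℤ | p.2 = -1 ∨ p.2 = 1} = 1)
    (hTlab : T {p : X × ℤ | p.2 = -1 ∨ p.2 = 1} = 1) :
    2 * sSup {r : ℝ | ∃ A : Set (X × ℤ), MeasurableSet A ∧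
        r = |(S A).toReal - (T A).toReal|}
      ≤ 4 * ⨆ h : {h : X → ℤ | Measurable h ∧ ∀ x, h x = -1 ∨ h x = 0 ∨ h x = 1},
          |(S {p : X × ℤ | (h : X → ℤ) p.1 ≠ p.2}).toReal
            - (T {p : X × ℤ | (h : X → ℤ) p.1 ≠ p.2}).toReal| := by
  set M := ⨆ h : {h : X → ℤ | Measurable h ∧ ∀ x, h x = -1 ∨ h x = 0 ∨ h x = 1},
          |(S {p : X × ℤ | (h : X → ℤ) p.1 ≠ p.2}).toReal
            - (T {p : X × ℤ | (h : X → ℤ) p.1 ≠ p.2}).toReal| with hMdef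
  have hbdd : BddAbove (Set.range fun h : {h : X → ℤ | Measurable h ∧ ∀ x,
      h x = -1 ∨ h x = 0 ∨ h x = 1} =>
      |(S {p : X × ℤ | (h : X → ℤ) p.1 ≠ p.2}).toReal
        - (T {p : X × ℤ | (h : X → ℤ) p.1 ≠ p.2}).toReal|) := by
    refine ⟨2, ?_⟩
    rintro r ⟨h, rfl⟩
    calc |(S {p : X × ℤ | (h : X → ℤ) p.1 ≠ p.2}).toReal
        - (T {p : X × ℤ | (h : X → ℤ) p.1 ≠ p.2}).toReal|
        ≤ |(S {p : X × ℤ | (h : X → ℤ) p.1 ≠ p.2}).toReal|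
          + |(T {p : X × ℤ | (h : X → ℤ) p.1 ≠ p.2}).toReal| := abs_sub _ _
      _ ≤ 1 + 1 := by
          gcongr <;> rw [abs_of_nonneg ENNReal.toReal_nonneg] <;> exact aux_le_one _ _
      _ = 2 := by norm_num
  have hM0 : 0 ≤ M := by
    refine le_trans (abs_nonneg ((S {p : X × ℤ | (1:ℤ) ≠ p.2}).toReal
      - (T {p : X × ℤ | (1:ℤ) ≠ p.2}).toReal)) ?_
    exact le_ciSup hbdd ⟨fun _ => (1:ℤ), measurable_const, fun x => Or.inr (Or.inr rfl)⟩
  have key : sSup {r : ℝ | ∃ A : Set (X × ℤ), MeasurableSet A ∧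
      r = |(S A).toReal - (T A).toReal|} ≤ 2 * M := by
    refine Real.sSup_le ?_ (by linarith)
    rintro r ⟨A, hA, rfl⟩
    set B : Set X := {x | (x, (1:ℤ)) ∈ A} with hBdef
    set C : Set X := {x | (x, (-1:ℤ)) ∈ A} with hCdef
    have hB : MeasurableSet B := hA.preimage (measurable_id.prodMk measurable_const)
    have hC : MeasurableSet C := hA.preimage (measurable_id.prodMk measurable_const)
    -- the two classifiers
    have mem₁ : (fun x => if x ∈ B then (0:ℤ) else 1) ∈ {h : X → ℤ | Measurable h ∧ ∀ x,
        h x = -1 ∨ h x = 0 ∨ h x = 1} :=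
      ⟨Measurable.ite hB measurable_const measurable_const,
        fun x => by by_cases hx : x ∈ B <;> simp [hx]⟩
    have mem₂ : (fun x => if x ∈ C then (0:ℤ) else -1) ∈ {h : X → ℤ | Measurable h ∧ ∀ x,
        h x = -1 ∨ h x = 0 ∨ h x = 1} :=
      ⟨Measurable.ite hC measurable_const measurable_const,
        fun x => by by_cases hx : x ∈ C <;> simp [hx]⟩
    have h1M : |(S {p : X × ℤ | (if p.1 ∈ B then (0:ℤ) else 1) ≠ p.2}).toReal
        - (T {p : X × ℤ | (if p.1 ∈ B then (0:ℤ) else 1) ≠ p.2}).toReal| ≤ M :=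
      le_ciSup hbdd ⟨_, mem₁⟩
    have h2M : |(S {p : X × ℤ | (if p.1 ∈ C then (0:ℤ) else -1) ≠ p.2}).toReal
        - (T {p : X × ℤ | (if p.1 ∈ C then (0:ℤ) else -1) ≠ p.2}).toReal| ≤ M :=
      le_ciSup hbdd ⟨_, mem₂⟩
    -- error decompositions, in ℝ
    have hSe1 : (S {p : X × ℤ | (if p.1 ∈ B then (0:ℤ) else 1) ≠ p.2}).toReal
        = (S ((Prod.fst ⁻¹' B) ∩ (Prod.snd ⁻¹' {1}))).toReal
          + (S (Prod.snd ⁻¹' {-1})).toReal := by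
      rw [aux_err S hSlab B hB 1 (-1) (Or.inl ⟨rfl, rfl⟩),
        ENNReal.toReal_add (measure_ne_top S _) (measure_ne_top S _)]
    have hTe1 : (T {p : X × ℤ | (if p.1 ∈ B then (0:ℤ) else 1) ≠ p.2}).toReal
        = (T ((Prod.fst ⁻¹' B) ∩ (Prod.snd ⁻¹' {1}))).toReal
          + (T (Prod.snd ⁻¹' {-1})).toReal := by
      rw [aux_err T hTlab B hB 1 (-1) (Or.inl ⟨rfl, rfl⟩),
        ENNReal.toReal_add (measure_ne_top T _) (measure_ne_top T _)]
    have hSe2 : (S {p : X × ℤ | (if p.1 ∈ C then (0:ℤ) else -1) ≠ p.2}).toReal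
        = (S ((Prod.fst ⁻¹' C) ∩ (Prod.snd ⁻¹' {-1}))).toReal
          + (S (Prod.snd ⁻¹' {1})).toReal := by
      rw [aux_err S hSlab C hC (-1) 1 (Or.inr ⟨rfl, rfl⟩),
        ENNReal.toReal_add (measure_ne_top S _) (measure_ne_top S _)]
    have hTe2 : (T {p : X × ℤ | (if p.1 ∈ C then (0:ℤ) else -1) ≠ p.2}).toReal
        = (T ((Prod.fst ⁻¹' C) ∩ (Prod.snd ⁻¹' {-1}))).toReal
          + (T (Prod.snd ⁻¹' {1})).toReal := by
      rw [aux_err T hTlab C hC (-1) 1 (Or.inr ⟨rfl, rfl⟩),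
        ENNReal.toReal_add (measure_ne_top T _) (measure_ne_top T _)]
    have hSA : (S A).toReal = (S ((Prod.fst ⁻¹' B) ∩ (Prod.snd ⁻¹' {1}))).toReal
        + (S ((Prod.fst ⁻¹' C) ∩ (Prod.snd ⁻¹' {-1}))).toReal := by
      rw [aux_A S hSlab A hA,
        ENNReal.toReal_add (measure_ne_top S _) (measure_ne_top S _)]
    have hTA : (T A).toReal = (T ((Prod.fst ⁻¹' B) ∩ (Prod.snd ⁻¹' {1}))).toReal
        + (T ((Prod.fst ⁻¹' C) ∩ (Prod.snd ⁻¹' {-1}))).toReal := by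
      rw [aux_A T hTlab A hA,
        ENNReal.toReal_add (measure_ne_top T _) (measure_ne_top T _)]
    have hSl : (S (Prod.snd ⁻¹' {1})).toReal + (S (Prod.snd ⁻¹' {-1})).toReal = 1 := by
      rw [← ENNReal.toReal_add (measure_ne_top S _) (measure_ne_top S _),
        aux_labels S hSlab, ENNReal.toReal_one]
    have hTl : (T (Prod.snd ⁻¹' {1})).toReal + (T (Prod.snd ⁻¹' {-1})).toReal = 1 := by
      rw [← ENNReal.toReal_add (measure_ne_top T _) (measure_ne_top T _),
        aux_labels T hTlab, ENNReal.toReal_one]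
    have hdiff : (S A).toReal - (T A).toReal
        = ((S {p : X × ℤ | (if p.1 ∈ B then (0:ℤ) else 1) ≠ p.2}).toReal
            - (T {p : X × ℤ | (if p.1 ∈ B then (0:ℤ) else 1) ≠ p.2}).toReal)
          + ((S {p : X × ℤ | (if p.1 ∈ C then (0:ℤ) else -1) ≠ p.2}).toReal
            - (T {p : X × ℤ | (if p.1 ∈ C then (0:ℤ) else -1) ≠ p.2}).toReal) := by
      rw [hSe1, hTe1, hSe2, hTe2, hSA, hTA]; linarith
    calc |(S A).toReal - (T A).toReal| ≤ _ + _ := by rw [hdiff]; exact abs_add_le _ _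
      _ ≤ M + M := add_le_add h1M h2M
      _ = 2 * M := by ring
  linarith
end

section
/- Estimation error reduction: for any Γ ⊆ H and empirical distributions Ŝ, T̂, one has T_Γ(S‖T) ≤ T_Γ(Ŝ‖T̂) + 2·est_Γ(S) + 2·est_Γ(T), where est_Γ(D) = sup_{h∈Γ} |ε_D(h) − ε_D̂(h)|. -/
/-- Reduction of estimation error for the one-sided transfer measure:
T_Γ(S‖T) ≤ T_Γ(Ŝ‖T̂) + 2 est_Γ(S) + 2 est_Γ(T). Here εSh, εTh are the empirical risks. -/
theorem stmt_11 {H : Type*} (Γ : Set H) (hΓ : Γ.Nonempty) (εS εT εSh εTh : H → ℝ)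
    (hbS : BddBelow (εS '' Γ)) (hbT : BddBelow (εT '' Γ))
    (hbSh : BddBelow (εSh '' Γ)) (hbTh : BddBelow (εTh '' Γ))
    (hbemp : BddAbove (Set.range fun h : Γ =>
      (εTh h - (⨅ h' : Γ, εTh h')) - (εSh h - (⨅ h' : Γ, εSh h'))))
    (hestS : BddAbove (Set.range fun h : Γ => |εS h - εSh h|))
    (hestT : BddAbove (Set.range fun h : Γ => |εT h - εTh h|)) :
    (⨆ h : Γ, ((εT h - (⨅ h' : Γ, εT h')) - (εS h - (⨅ h' : Γ, εS h'))))
      ≤ (⨆ h : Γ, ((εTh h - (⨅ h' : Γ, εTh h')) - (εSh h - (⨅ h' : Γ, εSh h'))))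
        + 2 * (⨆ h : Γ, |εS h - εSh h|) + 2 * (⨆ h : Γ, |εT h - εTh h|) := by
  have hne : Nonempty Γ := hΓ.to_subtype
  rw [Set.image_eq_range] at hbS hbT hbSh hbTh
  set ES := ⨆ h : Γ, |εS h - εSh h| with hES
  set ET := ⨆ h : Γ, |εT h - εTh h| with hET
  set iS := ⨅ h' : Γ, εS h' with hiS
  set iT := ⨅ h' : Γ, εT h' with hiT
  set iSh := ⨅ h' : Γ, εSh h' with hiSh
  set iTh := ⨅ h' : Γ, εTh h' with hiTh
  -- per-point bounds
  have hS : ∀ h : Γ, |εS h - εSh h| ≤ ES := fun h => le_ciSup hestS h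
  have hT : ∀ h : Γ, |εT h - εTh h| ≤ ET := fun h => le_ciSup hestT h
  -- inf bounds
  have h1 : iTh - ET ≤ iT := by
    apply le_ciInf
    intro h
    have := hT h
    have h2 : iTh ≤ εTh h := ciInf_le hbTh h
    have := abs_le.mp this
    linarith [this.1, this.2]
  have h2 : iS - ES ≤ iSh := by
    apply le_ciInf
    intro h
    have := hS h
    have h3 : iS ≤ εS h := ciInf_le hbS h
    have := abs_le.mp this
    linarith [this.1, this.2]
  apply ciSup_le
  intro h
  have hSh := abs_le.mp (hS h)
  have hTh := abs_le.mp (hT h)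
  have hle : (εTh h - iTh) - (εSh h - iSh) ≤
      ⨆ h : Γ, ((εTh h - iTh) - (εSh h - iSh)) := le_ciSup hbemp h
  linarith [hSh.1, hSh.2, hTh.1, hTh.2]
end

section
/- Optimization guarantee: suppose for learned (g, h) with h = q(θ,·), max_{‖θ'−θ‖≤δ} [ (1/n)Σ_i ε_{S_i}(h∘g) + (max_i ε_{S_i}(h'∘g) − min_i ε_{S_i}(h'∘g)) ] ≤ η, where each loss functional ε_{S_i^g} is L_ℓ-Lipschitz w.r.t. the L¹(S_i^g) norm and q(·,x) is L_θ-Lipschitz for all x. Then for Γ = {q(θ',·) : ‖θ'−θ‖ ≤ δ}: (a) T_Γ^r(T_1^g, T_2^g) ≤ η for any mixtures T_1^g, T_2^g ∈ conv(S_1^g,…,S_n^g); (b) ε_{S_i}(h'∘g) ≤ η + L_ℓ L_θ δ for all h' ∈ Γ and all i; (c) ε_T(h'∘g) ≤ 2η + L_ℓ L_θ δ for any mixture T with T^g ∈ conv(S_1^g,…,S_n^g). -/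
open MeasureTheory

/-- Optimization guarantee: if the minimax objective is at most η on the δ-ball
Γ = {q(θ',·) : ‖θ'−θ‖ ≤ δ}, then (a) the realizable transfer measure between any two
mixtures of the pushed-forward sources is at most η, (b) every source risk of every
classifier in Γ is at most η + L_ℓ L_θ δ, and (c) the risk on any mixture domain is at most
2η + L_ℓ L_θ δ. -/
theorem stmt_19 {X Z Y E Θ : Type*} [MeasurableSpace X] [MeasurableSpace Y]
    [MeasurableSpace Z] [NormedAddCommGroup E] [NormedAddCommGroup Θ]
    {n : ℕ} (hn : 0 < n)
    (S : Fin n → Measure (X × Y)) [∀ i, IsProbabilityMeasure (S i)]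
    (g : X → Z) (hg : Measurable fun p : X × Y => (g p.1, p.2))
    (q : Θ → Z → E) (ℓ : E → Y → ℝ) (hℓ0 : ∀ a y, 0 ≤ ℓ a y)
    (Lθ Lℓ δ η : ℝ) (hδ : 0 ≤ δ) (hLθ : 0 ≤ Lθ) (hLℓ : 0 ≤ Lℓ)
    (hqlip : ∀ z θ₁ θ₂, ‖q θ₁ z - q θ₂ z‖ ≤ Lθ * ‖θ₁ - θ₂‖)
    (θ : Θ)
    (hint : ∀ (θ' : Θ) (i : Fin n), Integrable
      (fun p : Z × Y => ℓ (q θ' p.1) p.2) ((S i).map fun p => (g p.1, p.2)))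
    (hlipfun : ∀ (i : Fin n) (θ₁ θ₂ : Θ),
      |(∫ p, ℓ (q θ₁ p.1) p.2 ∂((S i).map fun p => (g p.1, p.2)))
          - ∫ p, ℓ (q θ₂ p.1) p.2 ∂((S i).map fun p => (g p.1, p.2))|
        ≤ Lℓ * ∫ p, ‖q θ₁ p.1 - q θ₂ p.1‖ ∂((S i).map fun p => (g p.1, p.2)))
    (hopt : ∀ θ', ‖θ' - θ‖ ≤ δ → ∀ i j : Fin n,
      (1 / (n : ℝ)) * (∑ k, ∫ p, ℓ (q θ p.1) p.2 ∂((S k).map fun p => (g p.1, p.2)))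
        + ((∫ p, ℓ (q θ' p.1) p.2 ∂((S i).map fun p => (g p.1, p.2)))
          - ∫ p, ℓ (q θ' p.1) p.2 ∂((S j).map fun p => (g p.1, p.2))) ≤ η) :
    (∀ (π π' : Fin n → NNReal), ∑ i, π i = 1 → ∑ i, π' i = 1 →
      ∀ θ', ‖θ' - θ‖ ≤ δ →
        |(∫ p, ℓ (q θ' p.1) p.2
            ∂(∑ i, (π i : ENNReal) • (S i).map fun p => (g p.1, p.2)))
          - ∫ p, ℓ (q θ' p.1) p.2
            ∂(∑ i, (π' i : ENNReal) • (S i).map fun p => (g p.1, p.2))| ≤ η) ∧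
    (∀ θ', ‖θ' - θ‖ ≤ δ → ∀ i : Fin n,
      (∫ p, ℓ (q θ' p.1) p.2 ∂((S i).map fun p => (g p.1, p.2))) ≤ η + Lℓ * Lθ * δ) ∧
    (∀ (π : Fin n → NNReal), ∑ i, π i = 1 → ∀ θ', ‖θ' - θ‖ ≤ δ →
      (∫ p, ℓ (q θ' p.1) p.2
          ∂(∑ i, (π i : ENNReal) • (S i).map fun p => (g p.1, p.2)))
        ≤ 2 * η + Lℓ * Lθ * δ) := by
  classical
  set μ : Fin n → Measure (Z × Y) := fun i => (S i).map fun p => (g p.1, p.2) with hμ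
  have hprob : ∀ i, IsProbabilityMeasure (μ i) := fun i =>
    Measure.isProbabilityMeasure_map hg.aemeasurable
  set R : Θ → Fin n → ℝ := fun θ' i => ∫ p, ℓ (q θ' p.1) p.2 ∂(μ i) with hRdef
  have hR0 : ∀ θ' i, 0 ≤ R θ' i := fun θ' i =>
    integral_nonneg fun p => hℓ0 _ _
  set A : ℝ := (1 / (n : ℝ)) * (∑ k, R θ k) with hAdef
  have hA0 : 0 ≤ A := by
    apply mul_nonneg (by positivity)
    exact Finset.sum_nonneg fun k _ => hR0 θ k
  have hAη : A ≤ η := by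
    have := hopt θ (by simp [hδ]) ⟨0, hn⟩ ⟨0, hn⟩
    simpa using this
  have hη0 : 0 ≤ η := le_trans hA0 hAη
  -- pairwise differences at θ' in the ball
  have hdiff : ∀ θ', ‖θ' - θ‖ ≤ δ → ∀ i j, R θ' i - R θ' j ≤ η := by
    intro θ' hθ' i j
    have := hopt θ' hθ' i j
    have hA' : A + (R θ' i - R θ' j) ≤ η := this
    linarith
  -- closeness of risks between θ' and θ
  have hclose : ∀ θ', ‖θ' - θ‖ ≤ δ → ∀ i, |R θ' i - R θ i| ≤ Lℓ * (Lθ * δ) := by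
    intro θ' hθ' i
    refine le_trans (hlipfun i θ' θ) ?_
    refine mul_le_mul_of_nonneg_left ?_ hLℓ
    have hnn : 0 ≤ ∫ p, ‖q θ' p.1 - q θ p.1‖ ∂(μ i) :=
      integral_nonneg fun p => norm_nonneg _
    have hbd : ‖∫ p, ‖q θ' p.1 - q θ p.1‖ ∂(μ i)‖ ≤ (Lθ * δ) * ((μ i) Set.univ).toReal := by
      apply norm_integral_le_of_norm_le_const
      filter_upwards with p
      rw [Real.norm_eq_abs, abs_of_nonneg (norm_nonneg _)]
      calc ‖q θ' p.1 - q θ p.1‖ ≤ Lθ * ‖θ' - θ‖ := hqlip p.1 θ' θ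
        _ ≤ Lθ * δ := mul_le_mul_of_nonneg_left hθ' hLθ
    have := hprob i
    simp only [measure_univ, ENNReal.toReal_one, mul_one] at hbd
    calc ∫ p, ‖q θ' p.1 - q θ p.1‖ ∂(μ i) ≤ ‖∫ p, ‖q θ' p.1 - q θ p.1‖ ∂(μ i)‖ :=
          le_abs_self _
      _ ≤ Lθ * δ := hbd
  -- part (b)
  have partb : ∀ θ', ‖θ' - θ‖ ≤ δ → ∀ i, R θ' i ≤ η + Lℓ * Lθ * δ := by
    intro θ' hθ' i
    obtain ⟨j, -, hj⟩ := Finset.exists_min_image Finset.univ (R θ)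
      ⟨⟨0, hn⟩, Finset.mem_univ _⟩
    have hjA : R θ j ≤ A := by
      have h1 : (n : ℝ) * R θ j ≤ ∑ k, R θ k := by
        calc (n : ℝ) * R θ j = ∑ _k : Fin n, R θ j := by
              simp [Finset.sum_const, mul_comm]
          _ ≤ ∑ k, R θ k := Finset.sum_le_sum fun k _ => hj k (Finset.mem_univ k)
      have hnpos : (0 : ℝ) < n := by exact_mod_cast hn
      rw [hAdef]
      rw [div_mul_eq_mul_div, one_mul, le_div_iff₀ hnpos, mul_comm]
      exact h1
    have h1 : A + (R θ' i - R θ' j) ≤ η := hopt θ' hθ' i j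
    have h2 : |R θ' j - R θ j| ≤ Lℓ * (Lθ * δ) := hclose θ' hθ' j
    have h3 : R θ' j - R θ j ≤ Lℓ * (Lθ * δ) := le_trans (le_abs_self _) h2
    linarith
  -- mixture integral
  have hmix : ∀ (π : Fin n → NNReal) (θ' : Θ),
      (∫ p, ℓ (q θ' p.1) p.2 ∂(∑ i, (π i : ENNReal) • μ i))
        = ∑ i, (π i : ℝ) * R θ' i := by
    intro π θ'
    rw [integral_finset_sum_measure]
    · refine Finset.sum_congr rfl fun i _ => ?_
      rw [integral_smul_measure]
      simp [hRdef, smul_eq_mul]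
    · intro i _
      exact (hint θ' i).smul_measure ENNReal.coe_ne_top
  have hsum1 : ∀ (π : Fin n → NNReal), ∑ i, π i = 1 → ∑ i, (π i : ℝ) = 1 := by
    intro π hπ
    exact_mod_cast congrArg (fun x : NNReal => (x : ℝ)) hπ
  -- mixture value bounds
  have hmixub : ∀ (π : Fin n → NNReal), ∑ i, π i = 1 → ∀ θ' (c : ℝ),
      (∀ i, R θ' i ≤ c) → ∑ i, (π i : ℝ) * R θ' i ≤ c := by
    intro π hπ θ' c hc
    calc ∑ i, (π i : ℝ) * R θ' i ≤ ∑ i, (π i : ℝ) * c :=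
          Finset.sum_le_sum fun i _ =>
            mul_le_mul_of_nonneg_left (hc i) (π i).coe_nonneg
      _ = c := by rw [← Finset.sum_mul, hsum1 π hπ, one_mul]
  have hmixlb : ∀ (π : Fin n → NNReal), ∑ i, π i = 1 → ∀ θ' (c : ℝ),
      (∀ i, c ≤ R θ' i) → c ≤ ∑ i, (π i : ℝ) * R θ' i := by
    intro π hπ θ' c hc
    calc c = ∑ i, (π i : ℝ) * c := by rw [← Finset.sum_mul, hsum1 π hπ, one_mul]
      _ ≤ ∑ i, (π i : ℝ) * R θ' i :=
          Finset.sum_le_sum fun i _ =>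
            mul_le_mul_of_nonneg_left (hc i) (π i).coe_nonneg
  refine ⟨?_, partb, ?_⟩
  · -- part (a)
    intro π π' hπ hπ' θ' hθ'
    rw [hmix π θ', hmix π' θ']
    rw [abs_le]
    constructor
    · -- -η ≤ u - v, i.e. v ≤ u + η
      have hub : ∑ i, (π' i : ℝ) * R θ' i ≤ (∑ i, (π i : ℝ) * R θ' i) + η := by
        obtain ⟨j, -, hj⟩ := Finset.exists_max_image Finset.univ (R θ')
          ⟨⟨0, hn⟩, Finset.mem_univ _⟩
        have h1 : ∑ i, (π' i : ℝ) * R θ' i ≤ R θ' j :=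
          hmixub π' hπ' θ' _ fun i => hj i (Finset.mem_univ i)
        have h2 : R θ' j - η ≤ ∑ i, (π i : ℝ) * R θ' i := by
          apply hmixlb π hπ θ'
          intro i
          have := hdiff θ' hθ' j i
          linarith
        linarith
      linarith
    · -- u - v ≤ η
      obtain ⟨j, -, hj⟩ := Finset.exists_max_image Finset.univ (R θ')
        ⟨⟨0, hn⟩, Finset.mem_univ _⟩
      have h1 : ∑ i, (π i : ℝ) * R θ' i ≤ R θ' j :=
        hmixub π hπ θ' _ fun i => hj i (Finset.mem_univ i)
      have h2 : R θ' j - η ≤ ∑ i, (π' i : ℝ) * R θ' i := by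
        apply hmixlb π' hπ' θ'
        intro i
        have := hdiff θ' hθ' j i
        linarith
      linarith
  · -- part (c)
    intro π hπ θ' hθ'
    rw [hmix π θ']
    have := hmixub π hπ θ' (η + Lℓ * Lθ * δ) (partb θ' hθ')
    linarith
end
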